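/- arXiv:1407.2654 — 7 statements merged into one kernel-verified Lean document; each statement's English description precedes it below -/
import Mathlib

section
/- The point Q = (32, 96) is a rational torsion point of order exactly 8 on the elliptic curve F : y² = x³ − 31x² + 256x over ℚ, and 4Q = (0, 0). -/
/-- The curve `F : y² = x³ − 31x² + 256x` over `ℚ`. -/
def Fcurve : WeierstrassCurve.Affine ℚ :=
  { a₁ := 0, a₂ := -31, a₃ := 0, a₄ := 256, a₆ := 0 }

open WeierstrassCurve.Affine WeierstrassCurve.Affine.Point

lemma some_eq_some {W : WeierstrassCurve.Affine ℚ} {x₁ y₁ x₂ y₂ : ℚ}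
    (h₁ : W.Nonsingular x₁ y₁) (h₂ : W.Nonsingular x₂ y₂) (hx : x₁ = x₂) (hy : y₁ = y₂) :
    Point.some _ _ h₁ = Point.some _ _ h₂ := by subst hx; subst hy; rfl

lemma hQ : Fcurve.Nonsingular 32 96 := by
  rw [nonsingular_iff, equation_iff]; norm_num [Fcurve]

lemma hQ2 : Fcurve.Nonsingular 16 16 := by
  rw [nonsingular_iff, equation_iff]; norm_num [Fcurve]

lemma hQ4 : Fcurve.Nonsingular 0 0 := by
  rw [nonsingular_iff, equation_iff]; norm_num [Fcurve]

lemma step1 : Point.some _ _ hQ + Point.some _ _ hQ = Point.some _ _ hQ2 := by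
  rw [add_self_of_Y_ne (by norm_num [Fcurve, negY])]
  exact some_eq_some _ _
    (by norm_num [Fcurve, addX, WeierstrassCurve.Affine.slope, negY]) (by norm_num [Fcurve, addY, negAddY, addX, WeierstrassCurve.Affine.slope, negY])

lemma step2 : Point.some _ _ hQ2 + Point.some _ _ hQ2 = Point.some _ _ hQ4 := by
  rw [add_self_of_Y_ne (by norm_num [Fcurve, negY])]
  exact some_eq_some _ _
    (by norm_num [Fcurve, addX, WeierstrassCurve.Affine.slope, negY]) (by norm_num [Fcurve, addY, negAddY, addX, WeierstrassCurve.Affine.slope, negY])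

lemma step3 : Point.some _ _ hQ4 + Point.some _ _ hQ4 = 0 :=
  add_self_of_Y_eq (by norm_num [Fcurve, negY])

lemma four_smul : (4 : ℕ) • Point.some _ _ hQ = Point.some _ _ hQ4 := by
  have : (4 : ℕ) • Point.some _ _ hQ = (Point.some _ _ hQ + Point.some _ _ hQ) + (Point.some _ _ hQ + Point.some _ _ hQ) := by
    rw [show (4:ℕ) = 2 + 2 from rfl, add_smul, two_nsmul]
  rw [this, step1, step2]

/-- The point `Q = (32, 96)` is a rational torsion point of order exactly `8` on the
elliptic curve `F : y² = x³ − 31x² + 256x` over `ℚ`, and `4Q = (0, 0)`. -/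
theorem order_eight_point_on_F :
    ∃ (h : Fcurve.Nonsingular 32 96) (h0 : Fcurve.Nonsingular 0 0),
      addOrderOf (WeierstrassCurve.Affine.Point.some _ _ h) = 8 ∧
      (4 : ℕ) • (WeierstrassCurve.Affine.Point.some _ _ h) =
        WeierstrassCurve.Affine.Point.some _ _ h0 := by
  refine ⟨hQ, hQ4, ?_, four_smul⟩
  have h8 : (2 : ℕ) ^ 3 • Point.some _ _ hQ = 0 := by
    have : (2:ℕ)^3 = 4 + 4 := rfl
    rw [this, add_smul, four_smul, step3]
  have h4 : ¬ (2 : ℕ) ^ 2 • Point.some _ _ hQ = 0 := by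
    have : (2:ℕ)^2 = 4 := rfl
    rw [this, four_smul]
    exact fun h => by simp at h
  exact addOrderOf_eq_prime_pow (p := 2) (n := 2) h4 h8
end

section
/- The point (48459, 769824) is a rational torsion point of order exactly 7 on the elliptic curve y² = x³ − 7483623723x + 249446508217254 over ℚ. -/
/-- The elliptic curve `y² = x³ + (-7483623723)x + (249446508217254)` over `ℚ` (Cremona label 858k1). -/
def E858k1 : WeierstrassCurve.Affine ℚ :=
  { a₁ := 0, a₂ := 0, a₃ := 0, a₄ := -7483623723, a₆ := 249446508217254 }

open WeierstrassCurve.Affine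

lemma E858k1_ns {x y : ℚ} (h : y ^ 2 = x ^ 3 - 7483623723 * x + 249446508217254)
    (h' : y ≠ 0) : E858k1.Nonsingular x y := by
  rw [nonsingular_iff, equation_iff]
  constructor
  · simp only [E858k1]; linarith
  · right
    simp only [E858k1]
    intro hc
    apply h'
    linarith

lemma add_helper {x₁ y₁ x₂ y₂ x₃ y₃ : ℚ} (h₁ : E858k1.Nonsingular x₁ y₁)
    (h₂ : E858k1.Nonsingular x₂ y₂) (h₃ : E858k1.Nonsingular x₃ y₃)
    (hxy : x₁ = x₂ → y₁ ≠ E858k1.negY x₂ y₂)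
    (hX : E858k1.addX x₁ x₂ (E858k1.slope x₁ x₂ y₁ y₂) = x₃)
    (hY : E858k1.addY x₁ x₂ y₁ (E858k1.slope x₁ x₂ y₁ y₂) = y₃) :
    Point.some _ _ h₁ + Point.some _ _ h₂ = Point.some _ _ h₃ := by
  subst hX hY
  exact Point.add_some (fun ⟨hx, hy⟩ => hxy hx hy)

lemma negY_eq (x y : ℚ) : E858k1.negY x y = -y := by
  simp [WeierstrassCurve.Affine.negY, E858k1]

/-- The point `(48459, 769824)` is a rational torsion point of order exactly `7` on the
elliptic curve `y² = x³ + (-7483623723)x + (249446508217254)` over `ℚ`. -/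
theorem order_point_858k1 :
    ∃ h : E858k1.Nonsingular (48459) (769824),
      addOrderOf (WeierstrassCurve.Affine.Point.some _ _ h) = 7 := by
  have h1 : E858k1.Nonsingular 48459 769824 := E858k1_ns (by norm_num) (by norm_num)
  have h2 : E858k1.Nonsingular (-15693) (-19053144) := E858k1_ns (by norm_num) (by norm_num)
  have h3 : E858k1.Nonsingular 62715 (-5174928) := E858k1_ns (by norm_num) (by norm_num)
  have h4 : E858k1.Nonsingular 62715 5174928 := E858k1_ns (by norm_num) (by norm_num)
  have h5 : E858k1.Nonsingular (-15693) 19053144 := E858k1_ns (by norm_num) (by norm_num)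
  have h6 : E858k1.Nonsingular 48459 (-769824) := E858k1_ns (by norm_num) (by norm_num)
  refine ⟨h1, ?_⟩
  have hy1 : (769824 : ℚ) ≠ E858k1.negY 48459 769824 := by rw [negY_eq]; norm_num
  have s11 : E858k1.slope 48459 48459 769824 769824 =
      (3 * 48459 ^ 2 + 2 * E858k1.a₂ * 48459 + E858k1.a₄ - E858k1.a₁ * 769824) /
        (769824 - E858k1.negY 48459 769824) := slope_of_Y_ne rfl hy1
  have e2 : Point.some _ _ h1 + Point.some _ _ h1 = Point.some _ _ h2 := by
    apply add_helper _ _ _ (fun _ => hy1) <;>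
      rw [s11] <;> simp only [addX, addY, negAddY, negY_eq, negY, E858k1] <;> norm_num
  have e3 : Point.some _ _ h2 + Point.some _ _ h1 = Point.some _ _ h3 := by
    have hx : (-15693 : ℚ) ≠ 48459 := by norm_num
    have s : E858k1.slope (-15693) 48459 (-19053144) 769824 =
        ((-19053144) - 769824) / ((-15693) - 48459) := slope_of_X_ne hx
    apply add_helper _ _ _ (fun h => absurd h hx) <;>
      rw [s] <;> simp only [addX, addY, negAddY, negY, E858k1] <;> norm_num
  have e4 : Point.some _ _ h3 + Point.some _ _ h1 = Point.some _ _ h4 := by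
    have hx : (62715 : ℚ) ≠ 48459 := by norm_num
    have s : E858k1.slope 62715 48459 (-5174928) 769824 =
        ((-5174928) - 769824) / (62715 - 48459) := slope_of_X_ne hx
    apply add_helper _ _ _ (fun h => absurd h hx) <;>
      rw [s] <;> simp only [addX, addY, negAddY, negY, E858k1] <;> norm_num
  have e5 : Point.some _ _ h4 + Point.some _ _ h1 = Point.some _ _ h5 := by
    have hx : (62715 : ℚ) ≠ 48459 := by norm_num
    have s : E858k1.slope 62715 48459 5174928 769824 =
        (5174928 - 769824) / (62715 - 48459) := slope_of_X_ne hx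
    apply add_helper _ _ _ (fun h => absurd h hx) <;>
      rw [s] <;> simp only [addX, addY, negAddY, negY, E858k1] <;> norm_num
  have e6 : Point.some _ _ h5 + Point.some _ _ h1 = Point.some _ _ h6 := by
    have hx : (-15693 : ℚ) ≠ 48459 := by norm_num
    have s : E858k1.slope (-15693) 48459 19053144 769824 =
        (19053144 - 769824) / ((-15693) - 48459) := slope_of_X_ne hx
    apply add_helper _ _ _ (fun h => absurd h hx) <;>
      rw [s] <;> simp only [addX, addY, negAddY, negY, E858k1] <;> norm_num
  have e7 : Point.some _ _ h6 + Point.some _ _ h1 = 0 :=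
    Point.add_of_Y_eq rfl (by rw [negY_eq])
  have h7 : (7 : ℕ) • Point.some _ _ h1 = 0 := by
    have : (7 : ℕ) • Point.some _ _ h1 =
        Point.some _ _ h1 + Point.some _ _ h1 + Point.some _ _ h1 + Point.some _ _ h1 + Point.some _ _ h1 +
          Point.some _ _ h1 + Point.some _ _ h1 := by
      simp only [show (7:ℕ) = 6+1 from rfl, show (6:ℕ) = 5+1 from rfl,
        show (5:ℕ) = 4+1 from rfl, show (4:ℕ) = 3+1 from rfl, show (3:ℕ) = 2+1 from rfl,
        show (2:ℕ) = 1+1 from rfl, succ_nsmul, one_nsmul, zero_nsmul, zero_add]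
    rw [this, e2, e3, e4, e5, e6, e7]
  have hne : Point.some _ _ h1 ≠ 0 := by
    intro hc
    exact (Point.some_ne_zero h1) hc
  haveI : Fact (Nat.Prime 7) := ⟨by norm_num⟩
  exact addOrderOf_eq_prime h7 hne
end

section
/- Let K be a field of characteristic not 2, 3, or 7, let s ∈ K, and suppose s²+63 ≠ 0. Set a = −8(s⁴ + 42s² − 147)/(s² + 63)² and b = 16(s² + 7)³/(s² + 63)³. Then the point P = (4(s² + 7)/(s² + 63), 224(s² + 7)/(s² + 63)²) lies on the curve y² = x(x² + ax + b), and if this cubic is separable, P is a point of order dividing 6 on the corresponding elliptic curve with 3P = (0,0). -/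
open Polynomial

private lemma point_some_eq_aux {K : Type*} [Field K] {W : WeierstrassCurve.Affine K}
    {x₁ y₁ x₂ y₂ : K} (hx : x₁ = x₂) (hy : y₁ = y₂)
    (h₁ : W.Nonsingular x₁ y₁) (h₂ : W.Nonsingular x₂ y₂) :
    WeierstrassCurve.Affine.Point.some _ _ h₁ = WeierstrassCurve.Affine.Point.some _ _ h₂ := by
  subst hx; subst hy; rfl

open Classical in
/-- Let `K` be a field of characteristic not `2`, `3`, or `7`, let `s ∈ K` with
`s² + 63 ≠ 0`.  Set `a = −8(s⁴ + 42s² − 147)/(s² + 63)²` and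
`b = 16(s² + 7)³/(s² + 63)³`.  Then the point
`P = (4(s² + 7)/(s² + 63), 224(s² + 7)/(s² + 63)²)` lies on the curve
`y² = x(x² + ax + b)`, and if this cubic is separable, `P` is a point of order
dividing `6` on the corresponding elliptic curve with `3P = (0,0)`. -/
theorem point_of_order_six {K : Type*} [Field K]
    (h2 : (2 : K) ≠ 0) (h3 : (3 : K) ≠ 0) (h7 : (7 : K) ≠ 0)
    (s : K) (hs : s ^ 2 + 63 ≠ 0)
    (a b : K)
    (ha : a = -8 * (s ^ 4 + 42 * s ^ 2 - 147) / (s ^ 2 + 63) ^ 2)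
    (hb : b = 16 * (s ^ 2 + 7) ^ 3 / (s ^ 2 + 63) ^ 3)
    (E : WeierstrassCurve.Affine K)
    (hE : E = { a₁ := 0, a₂ := a, a₃ := 0, a₄ := b, a₆ := 0 }) :
    E.Equation (4 * (s ^ 2 + 7) / (s ^ 2 + 63))
      (224 * (s ^ 2 + 7) / (s ^ 2 + 63) ^ 2) ∧
    ((X * (X ^ 2 + C a * X + C b) : K[X]).Separable →
      ∃ (h : E.Nonsingular (4 * (s ^ 2 + 7) / (s ^ 2 + 63))
              (224 * (s ^ 2 + 7) / (s ^ 2 + 63) ^ 2))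
        (h0 : E.Nonsingular 0 0),
        addOrderOf (WeierstrassCurve.Affine.Point.some _ _ h) ∣ 6 ∧
        (3 : ℕ) • (WeierstrassCurve.Affine.Point.some _ _ h) =
          WeierstrassCurve.Affine.Point.some _ _ h0) := by
  have h16 : (16 : K) ≠ 0 := by
    have : (16 : K) = 2 ^ 4 := by norm_num
    rw [this]; exact pow_ne_zero _ h2
  have h224 : (224 : K) ≠ 0 := by
    have : (224 : K) = 2 ^ 5 * 7 := by norm_num
    rw [this]; exact mul_ne_zero (pow_ne_zero _ h2) h7
  have h56 : (56 : K) ≠ 0 := by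
    have : (56 : K) = 2 ^ 3 * 7 := by norm_num
    rw [this]; exact mul_ne_zero (pow_ne_zero _ h2) h7
  have hv : (s ^ 2 + 63) * (s ^ 2 + 63)⁻¹ = 1 := mul_inv_cancel₀ hs
  -- the equation
  have heq : E.Equation (4 * (s ^ 2 + 7) / (s ^ 2 + 63))
      (224 * (s ^ 2 + 7) / (s ^ 2 + 63) ^ 2) := by
    subst hE ha hb
    rw [WeierstrassCurve.Affine.equation_iff]
    field_simp [hs]
    ring
  refine ⟨heq, fun hsep => ?_⟩
  -- separability forces `s ^ 2 + 7 ≠ 0`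
  have hu : s ^ 2 + 7 ≠ 0 := by
    intro h0
    have hbz : b = 0 := by rw [hb, h0]; simp
    apply Polynomial.not_isUnit_X (R := K)
    refine hsep.squarefree X ?_
    exact ⟨X + C a, by rw [hbz]; simp; ring⟩
  have hbne : b ≠ 0 := by
    rw [hb]
    exact div_ne_zero (mul_ne_zero h16 (pow_ne_zero _ hu)) (pow_ne_zero _ hs)
  have hy1 : (224 * (s ^ 2 + 7) / (s ^ 2 + 63) ^ 2 : K) ≠ 0 :=
    div_ne_zero (mul_ne_zero h224 hu) (pow_ne_zero _ hs)
  -- nonsingularity of P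
  have hP : E.Nonsingular (4 * (s ^ 2 + 7) / (s ^ 2 + 63))
      (224 * (s ^ 2 + 7) / (s ^ 2 + 63) ^ 2) := by
    rw [WeierstrassCurve.Affine.nonsingular_iff']
    refine ⟨heq, Or.inr ?_⟩
    rw [hE]
    intro h
    apply mul_ne_zero h2 hy1
    linear_combination h
  -- nonsingularity of (0, 0)
  have h0pt : E.Nonsingular 0 0 := by
    rw [hE, WeierstrassCurve.Affine.nonsingular_zero]
    exact ⟨rfl, Or.inr hbne⟩
  refine ⟨hP, h0pt, ?_⟩
  have hyne : (224 * (s ^ 2 + 7) / (s ^ 2 + 63) ^ 2 : K) ≠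
      E.negY (4 * (s ^ 2 + 7) / (s ^ 2 + 63)) (224 * (s ^ 2 + 7) / (s ^ 2 + 63) ^ 2) := by
    rw [hE]
    simp only [WeierstrassCurve.Affine.negY]
    intro h
    apply mul_ne_zero h2 hy1
    linear_combination h
  -- the slope of the tangent at P
  have hL : E.slope (4 * (s ^ 2 + 7) / (s ^ 2 + 63)) (4 * (s ^ 2 + 7) / (s ^ 2 + 63))
      (224 * (s ^ 2 + 7) / (s ^ 2 + 63) ^ 2) (224 * (s ^ 2 + 7) / (s ^ 2 + 63) ^ 2) =
      2 * (s ^ 2 + 35) / (s ^ 2 + 63) := by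
    rw [WeierstrassCurve.Affine.slope_of_Y_ne rfl hyne,
      div_eq_div_iff (sub_ne_zero.mpr hyne) hs, hE]
    simp only [WeierstrassCurve.Affine.negY]
    rw [ha, hb]
    simp only [div_eq_mul_inv, ← inv_pow]
    linear_combination ((71344 : K) - 7056 * s ^ 2 - 2800 * s ^ 4 - 48 * s ^ 6) *
      ((s ^ 2 + 63)⁻¹) ^ 2 * hv
  -- coordinates of 2P
  have hxA : E.addX (4 * (s ^ 2 + 7) / (s ^ 2 + 63)) (4 * (s ^ 2 + 7) / (s ^ 2 + 63))
      (2 * (s ^ 2 + 35) / (s ^ 2 + 63)) = 4 * (s ^ 2 + 7) ^ 2 / (s ^ 2 + 63) ^ 2 := by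
    rw [hE]
    simp only [WeierstrassCurve.Affine.addX]
    rw [ha]
    simp only [div_eq_mul_inv, ← inv_pow]
    linear_combination ((56 : K) + 8 * s ^ 2) * (s ^ 2 + 63)⁻¹ * hv
  have hyA : E.addY (4 * (s ^ 2 + 7) / (s ^ 2 + 63)) (4 * (s ^ 2 + 7) / (s ^ 2 + 63))
      (224 * (s ^ 2 + 7) / (s ^ 2 + 63) ^ 2) (2 * (s ^ 2 + 35) / (s ^ 2 + 63)) =
      224 * (s ^ 2 + 7) ^ 2 / (s ^ 2 + 63) ^ 3 := by
    rw [hE]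
    simp only [WeierstrassCurve.Affine.addY, WeierstrassCurve.Affine.negAddY,
      WeierstrassCurve.Affine.addX, WeierstrassCurve.Affine.negY]
    rw [ha]
    simp only [div_eq_mul_inv, ← inv_pow]
    linear_combination ((-4312 : K) - 784 * s ^ 2 - 24 * s ^ 4) * ((s ^ 2 + 63)⁻¹) ^ 2 * hv
  have h2P : E.Nonsingular (4 * (s ^ 2 + 7) ^ 2 / (s ^ 2 + 63) ^ 2)
      (224 * (s ^ 2 + 7) ^ 2 / (s ^ 2 + 63) ^ 3) := by
    have := WeierstrassCurve.Affine.nonsingular_add hP hP (fun hxy => hyne hxy.2)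
    rwa [hL, hxA, hyA] at this
  have hQQ : WeierstrassCurve.Affine.Point.some _ _ hP + WeierstrassCurve.Affine.Point.some _ _ hP =
      WeierstrassCurve.Affine.Point.some _ _ h2P := by
    rw [WeierstrassCurve.Affine.Point.add_self_of_Y_ne hyne]
    exact point_some_eq_aux (by rw [hL, hxA]) (by rw [hL, hyA]) _ _
  -- x-coordinates of 2P and P differ
  have hxne : (4 * (s ^ 2 + 7) ^ 2 / (s ^ 2 + 63) ^ 2 : K) ≠
      4 * (s ^ 2 + 7) / (s ^ 2 + 63) := by
    intro h
    rw [div_eq_div_iff (pow_ne_zero _ hs) hs] at h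
    apply mul_ne_zero (mul_ne_zero h224 hu) hs
    linear_combination -h
  -- the slope of the secant through 2P and P
  have hL2 : E.slope (4 * (s ^ 2 + 7) ^ 2 / (s ^ 2 + 63) ^ 2) (4 * (s ^ 2 + 7) / (s ^ 2 + 63))
      (224 * (s ^ 2 + 7) ^ 2 / (s ^ 2 + 63) ^ 3) (224 * (s ^ 2 + 7) / (s ^ 2 + 63) ^ 2) =
      56 / (s ^ 2 + 63) := by
    rw [WeierstrassCurve.Affine.slope_of_X_ne hxne]
    rw [div_eq_div_iff (sub_ne_zero.mpr hxne) hs]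
    field_simp [hs, hu, h2, h7, h224, h56]
    ring
  have hx0 : E.addX (4 * (s ^ 2 + 7) ^ 2 / (s ^ 2 + 63) ^ 2) (4 * (s ^ 2 + 7) / (s ^ 2 + 63))
      (56 / (s ^ 2 + 63)) = 0 := by
    rw [hE]
    simp only [WeierstrassCurve.Affine.addX]
    rw [ha]
    simp only [div_eq_mul_inv, ← inv_pow]
    linear_combination ((28 : K) + 4 * s ^ 2) * (s ^ 2 + 63)⁻¹ * hv
  have hy0 : E.addY (4 * (s ^ 2 + 7) ^ 2 / (s ^ 2 + 63) ^ 2) (4 * (s ^ 2 + 7) / (s ^ 2 + 63))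
      (224 * (s ^ 2 + 7) ^ 2 / (s ^ 2 + 63) ^ 3) (56 / (s ^ 2 + 63)) = 0 := by
    rw [hE]
    simp only [WeierstrassCurve.Affine.addY, WeierstrassCurve.Affine.negAddY,
      WeierstrassCurve.Affine.addX, WeierstrassCurve.Affine.negY]
    rw [ha]
    simp only [div_eq_mul_inv, ← inv_pow]
    linear_combination ((-1568 : K) - 224 * s ^ 2) * ((s ^ 2 + 63)⁻¹) ^ 2 * hv
  have h3Q : (3 : ℕ) • WeierstrassCurve.Affine.Point.some _ _ hP =
      WeierstrassCurve.Affine.Point.some _ _ h0pt := by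
    rw [show (3 : ℕ) • WeierstrassCurve.Affine.Point.some _ _ hP = (2 + 1) • WeierstrassCurve.Affine.Point.some _ _ hP from rfl, succ_nsmul, two_nsmul, hQQ,
      WeierstrassCurve.Affine.Point.add_of_X_ne hxne]
    exact point_some_eq_aux (by rw [hL2, hx0]) (by rw [hL2, hy0]) _ _
  refine ⟨?_, h3Q⟩
  rw [addOrderOf_dvd_iff_nsmul_eq_zero, show (6 : ℕ) • WeierstrassCurve.Affine.Point.some _ _ hP = (3 + 3) • WeierstrassCurve.Affine.Point.some _ _ hP from rfl, add_nsmul, h3Q]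
  refine WeierstrassCurve.Affine.Point.add_self_of_Y_eq ?_
  rw [hE]
  simp [WeierstrassCurve.Affine.negY]
end

section
/- Let K be a field of characteristic not 2, 3, or 7, s ∈ K with s² + 63 ≠ 0, and let r ∈ K̄ satisfy r² = −7. Then the roots of x² + ax + b, where a = −8(s⁴ + 42s² − 147)/(s² + 63)² and b = 16(s² + 7)³/(s² + 63)³, are α₂ = 4(s + r)³(s − 3r)/(s² + 63)² and α₃ = 4(s − r)³(s + 3r)/(s² + 63)². -/
open Polynomial

/-- Let `K` be a field of characteristic not `2`, `3`, or `7`, `s ∈ K` with `s² + 63 ≠ 0`,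
and let `r` in a (separably closed) extension `L` of `K` satisfy `r² = −7`.  The roots of
`x² + ax + b`, where `a = −8(s⁴ + 42s² − 147)/(s² + 63)²` and `b = 16(s² + 7)³/(s² + 63)³`,
are `α₂ = 4(s + r)³(s − 3r)/(s² + 63)²` and `α₃ = 4(s − r)³(s + 3r)/(s² + 63)²`; that is,
`x² + ax + b = (x − α₂)(x − α₃)` in `L[x]`. -/
theorem roots_of_quadratic_factor {K L : Type*} [Field K] [Field L] [Algebra K L]
    (h2 : (2 : K) ≠ 0) (h3 : (3 : K) ≠ 0) (h7 : (7 : K) ≠ 0)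
    (s : K) (hs : s ^ 2 + 63 ≠ 0)
    (r : L) (hr : r ^ 2 = -7)
    (a b : K)
    (ha : a = -8 * (s ^ 4 + 42 * s ^ 2 - 147) / (s ^ 2 + 63) ^ 2)
    (hb : b = 16 * (s ^ 2 + 7) ^ 3 / (s ^ 2 + 63) ^ 3)
    (α₂ α₃ : L)
    (hα₂ : α₂ = 4 * (algebraMap K L s + r) ^ 3 * (algebraMap K L s - 3 * r) /
      (algebraMap K L s ^ 2 + 63) ^ 2)
    (hα₃ : α₃ = 4 * (algebraMap K L s - r) ^ 3 * (algebraMap K L s + 3 * r) /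
      (algebraMap K L s ^ 2 + 63) ^ 2) :
    (X ^ 2 + C (algebraMap K L a) * X + C (algebraMap K L b) : L[X]) =
      (X - C α₂) * (X - C α₃) := by
  set t : L := algebraMap K L s with htdef
  have hinj : Function.Injective (algebraMap K L) := (algebraMap K L).injective
  have ht : t ^ 2 + 63 ≠ 0 := by
    have : algebraMap K L (s ^ 2 + 63) ≠ 0 := fun h => hs (hinj (by simpa using h))
    simpa [map_add, map_pow, map_ofNat] using this
  have key1 : 4 * (t + r) ^ 3 * (t - 3 * r) + 4 * (t - r) ^ 3 * (t + 3 * r)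
      = 8 * t ^ 4 + 336 * t ^ 2 - 1176 := by
    linear_combination (-24 * r ^ 2 - 48 * t ^ 2 + 168) * hr
  have key2 : (4 * (t + r) ^ 3 * (t - 3 * r)) * (4 * (t - r) ^ 3 * (t + 3 * r))
      = 16 * (t ^ 2 + 7) ^ 3 * (t ^ 2 + 63) := by
    linear_combination (144 * r ^ 6 - 448 * t ^ 2 * r ^ 4 - 1008 * r ^ 4 + 480 * t ^ 4 * r ^ 2
      + 3136 * t ^ 2 * r ^ 2 + 7056 * r ^ 2 - 192 * t ^ 6 - 3360 * t ^ 4 - 21952 * t ^ 2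
      - 49392) * hr
  have hsum : algebraMap K L a = -(α₂ + α₃) := by
    rw [ha, hα₂, hα₃, map_div₀]
    push_cast [map_mul, map_neg, map_sub, map_add, map_pow, map_ofNat]
    rw [← htdef, ← add_div, key1]
    field_simp
    ring
  have hprod : algebraMap K L b = α₂ * α₃ := by
    rw [hb, hα₂, hα₃, map_div₀]
    push_cast [map_mul, map_neg, map_sub, map_add, map_pow, map_ofNat]
    rw [← htdef, div_mul_div_comm, key2]
    field_simp
  rw [hsum, hprod]
  simp only [map_neg, map_add, map_mul]
  ring
end

section
/- Let L be a commutative ring containing an element ρ with ρ² = −7, and let s be an element such that s² + 63 and s + ρ and 8s² + 7(1 − 3ρ)s + 1568 are units. Define A = 4(s + ρ)³(s − 3ρ)/(s² + 63)², B = (31 − 3ρ)/2 (assuming 2 invertible), ℓ = (1 − ρ)(s + ρ)²/(s² + 63), and m = 3(5 − ρ)(s − 3ρ)/(2(s + ρ)). Then A·(B − 32) = ℓ²·m. -/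
/-- Let `L` be a commutative ring in which `2` is invertible, containing an element `ρ`
with `ρ² = −7`, and let `s ∈ L` be such that `s² + 63`, `s + ρ`, and
`8s² + 7(1 − 3ρ)s + 1568` are units.  Define
`A = 4(s + ρ)³(s − 3ρ)/(s² + 63)²`, `B = (31 − 3ρ)/2`,
`ℓ = (1 − ρ)(s + ρ)²/(s² + 63)`, and `m = 3(5 − ρ)(s − 3ρ)/(2(s + ρ))`.
Then `A·(B − 32) = ℓ²·m`. -/
theorem A_times_B_sub_32_eq_ell_sq_m {L : Type*} [CommRing L]
    (ρ s : L) (hρ : ρ ^ 2 = -7)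
    [Invertible (2 : L)] [Invertible (s ^ 2 + 63)] [Invertible (s + ρ)]
    [Invertible (8 * s ^ 2 + 7 * (1 - 3 * ρ) * s + 1568)]
    (A B ℓ m : L)
    (hA : A = 4 * (s + ρ) ^ 3 * (s - 3 * ρ) * (⅟(s ^ 2 + 63)) ^ 2)
    (hB : B = (31 - 3 * ρ) * ⅟(2 : L))
    (hℓ : ℓ = (1 - ρ) * (s + ρ) ^ 2 * ⅟(s ^ 2 + 63))
    (hm : m = 3 * (5 - ρ) * (s - 3 * ρ) * ⅟(2 : L) * ⅟(s + ρ)) :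
    A * (B - 32) = ℓ ^ 2 * m := by
  have h2 : (2 : L) * ⅟(2 : L) = 1 := mul_invOf_self _
  have hsa : (s + ρ) * ⅟(s + ρ) = 1 := mul_invOf_self _
  subst hA hB hℓ hm
  linear_combination (128 * (s + ρ)^3 * (s - 3*ρ) * (⅟(s ^ 2 + 63))^2) * h2
    + (-3 * (7 - ρ) * (s + ρ)^3 * (s - 3*ρ) * (⅟(s ^ 2 + 63))^2 * ⅟(2:L)) * hρ
    + (-3 * (1 - ρ)^2 * (5 - ρ) * (s + ρ)^3 * (s - 3*ρ) * (⅟(s ^ 2 + 63))^2 * ⅟(2:L)) * hsa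
end

section
/- Let L be a commutative ring in which 2 and 3 are invertible, containing ρ with ρ² = −7. Let z, w ∈ L satisfy w² = z³ + 14z² + 196z, suppose z⁴ − 896z³ − 24696z² − 175616z + 38416 and 8z² + 7(1 − 3ρ)z + 1568 and the relevant denominators are units, and set s = −21·((z² + 196)(z² + 56z + 196) + 32(z + 14)(z − 14)w)/(z⁴ − 896z³ − 24696z² − 175616z + 38416). Then m = 3(5 − ρ)(s − 3ρ)/(2(s + ρ)) satisfies m = n² where n = 6·((7 + 11ρ)w − 4z² + 784)/(8z² + 7(1 − 3ρ)z + 1568). -/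
/-- Let `L` be a commutative ring in which `2` and `3` are invertible, containing `ρ` with
`ρ² = −7`.  Let `z, w ∈ L` satisfy `w² = z³ + 14z² + 196z`, suppose the quartic
`z⁴ − 896z³ − 24696z² − 175616z + 38416`, the quantity `8z² + 7(1 − 3ρ)z + 1568`, and the
relevant denominator `s + ρ` are units, and set
`s = −21((z² + 196)(z² + 56z + 196) + 32(z + 14)(z − 14)w)/(z⁴ − 896z³ − 24696z² − 175616z + 38416)`.
Then `m = 3(5 − ρ)(s − 3ρ)/(2(s + ρ))` satisfies `m = n²` where
`n = 6((7 + 11ρ)w − 4z² + 784)/(8z² + 7(1 − 3ρ)z + 1568)`. -/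
theorem m_is_a_square {L : Type*} [CommRing L]
    (ρ z w : L) (hρ : ρ ^ 2 = -7)
    (hw : w ^ 2 = z ^ 3 + 14 * z ^ 2 + 196 * z)
    [Invertible (2 : L)] [Invertible (3 : L)]
    [Invertible (z ^ 4 - 896 * z ^ 3 - 24696 * z ^ 2 - 175616 * z + 38416)]
    [Invertible (8 * z ^ 2 + 7 * (1 - 3 * ρ) * z + 1568)]
    (s : L)
    (hs : s = -21 * ((z ^ 2 + 196) * (z ^ 2 + 56 * z + 196)
        + 32 * (z + 14) * (z - 14) * w)
      * ⅟(z ^ 4 - 896 * z ^ 3 - 24696 * z ^ 2 - 175616 * z + 38416))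
    [Invertible (s + ρ)]
    (m n : L)
    (hm : m = 3 * (5 - ρ) * (s - 3 * ρ) * ⅟(2 : L) * ⅟(s + ρ))
    (hn : n = 6 * ((7 + 11 * ρ) * w - 4 * z ^ 2 + 784)
      * ⅟(8 * z ^ 2 + 7 * (1 - 3 * ρ) * z + 1568)) :
    m = n ^ 2 := by
  set Q : L := z ^ 4 - 896 * z ^ 3 - 24696 * z ^ 2 - 175616 * z + 38416 with hQdef
  set D : L := 8 * z ^ 2 + 7 * (1 - 3 * ρ) * z + 1568 with hDdef
  set N : L := -21 * ((z ^ 2 + 196) * (z ^ 2 + 56 * z + 196)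
      + 32 * (z + 14) * (z - 14) * w) with hNdef
  set Num : L := (7 + 11 * ρ) * w - 4 * z ^ 2 + 784 with hNumdef
  have hs' : s * Q = N := by
    rw [hs]; rw [mul_assoc]; rw [invOf_mul_self]; ring
  have hn' : n * D = 6 * Num := by
    rw [hn]; rw [mul_assoc]; rw [invOf_mul_self]; ring
  have hm' : m * (2 * (s + ρ)) = 3 * (5 - ρ) * (s - 3 * ρ) := by
    rw [hm]
    trans 3 * (5 - ρ) * (s - 3 * ρ) * (⅟(2:L) * 2) * (⅟(s + ρ) * (s + ρ))
    · ring
    · rw [invOf_mul_self, invOf_mul_self]; ring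
  have key : 3 * (5 - ρ) * (N - 3 * ρ * Q) * D ^ 2 = 72 * Num ^ 2 * (N + ρ * Q) := by
    rw [hQdef, hDdef, hNdef, hNumdef]
    linear_combination ((850054496256) + (-47707140096)*w^1 + (6602327424)*w^2 + (-334680192)*w^2*ρ^1 + (-1147474944)*w^3 + (-3923912272896)*z^1 + (-22769316864)*z^1*ρ^1 + (244111859712)*z^1*w^1 + (3955311360)*z^1*w^2 + (1529966592)*z^1*w^2*ρ^1 + (-1145056069584)*z^2 + (104291603136)*z^2*ρ^1 + (152473104)*z^2*ρ^2 + (31899724416)*z^2*w^1 + (-174254976)*z^2*w^1*ρ^1 + (345546432)*z^2*w^2 + (215151552)*z^2*w^2*ρ^1 + (5854464)*z^2*w^3 + (-138614992992)*z^3 + (18775973664)*z^3*ρ^1 + (-697019904)*z^3*ρ^2 + (20180160)*z^3*w^2 + (7805952)*z^3*w^2*ρ^1 + (-11374458984)*z^4 + (1628454240)*z^4*ρ^1 + (-98018424)*z^4*ρ^2 + (-162753696)*z^4*w^1 + (889056)*z^4*w^1*ρ^1 + (171864)*z^4*w^2 + (-8712)*z^4*w^2*ρ^1 + (-707219352)*z^5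 + (95795784)*z^5*ρ^1 + (-3556224)*z^5*ρ^2 + (-6354432)*z^5*w^1 + (-29806749)*z^6 + (2714796)*z^6*ρ^1 + (3969)*z^6*ρ^2 + (6336)*z^6*w^1 + (-521136)*z^7 + (-3024)*z^7*ρ^1 + (576)*z^8) * hρ + ((-147458433024) + (-152415019008)*ρ^1 + (7567644672)*w^1 + (-1460422656)*w^1*ρ^1 + (-26873989632)*z^1 + (-7534453248)*z^1*ρ^1 + (-1327656960)*z^2 + (341397504)*z^2*ρ^1 + (-38610432)*z^2*w^1 + (7451136)*z^2*w^1*ρ^1 + (-137112192)*z^3 + (-38441088)*z^3*ρ^1 + (-3838464)*z^4 + (-3967488)*z^4*ρ^1) * hw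
  have hbig : m * (2 * (s + ρ) * D ^ 2 * Q) = n ^ 2 * (2 * (s + ρ) * D ^ 2 * Q) := by
    linear_combination (D ^ 2 * Q) * hm' - 2 * (s + ρ) * Q * (n * D + 6 * Num) * hn'
      + key + (3 * (5 - ρ) * D ^ 2 - 72 * Num ^ 2) * hs'
  letI : Invertible (2 * (s + ρ) * D ^ 2 * Q) :=
    (((invertibleMul 2 (s + ρ)).mul (invertiblePow D 2)).mul ‹Invertible Q›)
  exact (mul_left_inj_of_invertible _).mp hbig
end

section
/- The rational function on the curve w² = z³ + 14z² + 196z given by s(z, w) = −21·((z² + 196)(z² + 56z + 196) + 32(z + 14)(z − 14)w)/(z⁴ − 896z³ − 24696z² − 175616z + 38416) is invariant under translation by the 2-torsion point (0, 0): if (z', w') is the sum of (z, w) and (0, 0) in the group law of the elliptic curve D : y² = x³ + 14x² + 196x, then s(z', w') = s(z, w) whenever both sides are defined. -/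
/-- The rational function `s(z,w)` from Theorem 3.2, as a function of a point `(z, w)`. -/
noncomputable def sFun (z w : ℚ) : ℚ :=
  -21 * (((z ^ 2 + 196) * (z ^ 2 + 56 * z + 196) + 32 * (z + 14) * (z - 14) * w) /
    (z ^ 4 - 896 * z ^ 3 - 24696 * z ^ 2 - 175616 * z + 38416))

/-- The rational function `s(z, w)` on the curve `w² = z³ + 14z² + 196z` is invariant
under translation by the 2-torsion point `(0, 0)`: translation by `(0,0)` sends a point
`(z, w)` with `z ≠ 0` to `(196/z, −196w/z²)`, and `s(196/z, −196w/z²) = s(z, w)` whenever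
both sides are defined (i.e. the denominators are nonzero). -/
theorem sFun_invariant_under_translation (z w : ℚ)
    (hzw : w ^ 2 = z ^ 3 + 14 * z ^ 2 + 196 * z) (hz : z ≠ 0)
    (hden : z ^ 4 - 896 * z ^ 3 - 24696 * z ^ 2 - 175616 * z + 38416 ≠ 0)
    (hden' : (196 / z) ^ 4 - 896 * (196 / z) ^ 3 - 24696 * (196 / z) ^ 2
      - 175616 * (196 / z) + 38416 ≠ 0) :
    sFun (196 / z) (-196 * w / z ^ 2) = sFun z w := by
  unfold sFun
  rw [mul_eq_mul_left_iff]
  left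
  rw [div_eq_div_iff hden' hden]
  field_simp
  ring
end
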